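/- If x_{n+1} = q/(p + x_n) for all n ≥ 0 and the denominators W_{n+1} + x_0·W_n never vanish, then x_n = (q·W_n + x_0·q·W_{n−1})/(W_{n+1} + x_0·W_n) for all n ≥ 1. -/

import Mathlib

def W (p q : ℝ) : ℕ → ℝ
  | 0 => 0
  | 1 => 1
  | n + 2 => p * W p q (n + 1) + q * W p q n

theorem stmt_5 (p q : ℝ) (hp : 0 < p) (hq : 0 < q) (x : ℕ → ℝ)
    (hrec : ∀ n : ℕ, x (n + 1) = q / (p + x n))
    (hden : ∀ n : ℕ, W p q (n + 1) + x 0 * W p q n ≠ 0) :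
    ∀ n : ℕ, 1 ≤ n →
      x n = (q * W p q n + x 0 * q * W p q (n - 1)) / (W p q (n + 1) + x 0 * W p q n) := by
  intro n hn
  induction n with
  | zero => omega
  | succ m ih =>
    rcases Nat.eq_zero_or_pos m with hm | hm
    · subst hm
      have h0 := hden 0
      simp only [W] at h0 ⊢
      rw [hrec 0]
      ring_nf
      simp [W]
    · have ihm := ih hm
      have hdm := hden m
      have hdm1 := hden (m + 1)
      rw [hrec m, ihm]
      have key : p + (q * W p q m + x 0 * q * W p q (m - 1)) / (W p q (m + 1) + x 0 * W p q m)
          = (W p q (m + 2) + x 0 * W p q (m + 1)) / (W p q (m + 1) + x 0 * W p q m) := by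
        rw [eq_div_iff hdm, add_mul, div_mul_cancel₀ _ hdm]
        obtain ⟨k, rfl⟩ := Nat.exists_eq_add_of_le hm
        simp only [Nat.add_sub_cancel, show 1 + k + 2 = k + 3 from by ring,
          show 1 + k + 1 = k + 2 from by ring, show 1 + k = k + 1 from by ring] at *
        simp only [W]
        ring
      rw [key, div_div_eq_mul_div]
      simp only [Nat.add_sub_cancel, show m + 1 + 1 = m + 2 from rfl]
      congr 1
      ring
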